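/- Let I be an SPA-ST instance in which all preference lists of students and lecturers are strictly ordered (no ties). Then all stable matchings of I have the same cardinality; moreover, the set of students assigned is the same in every stable matching. -/
import Mathlib


open scoped Classical
open Finset

/-- An instance of the Student-Project Allocation problem with lecturer
preferences over students, with ties (SPA-ST).  Preferences are encoded by
rank functions: a lower rank means more preferred; equal ranks encode ties. -/
structure SPAST (S P L : Type) where
  /-- the lecturer offering each project -/
  lec : P → L
  /-- project capacities -/
  cap : P → ℕ
  /-- lecturer capacities -/
  dcap : L → ℕ
  /-- `acc s p` iff student `s` finds project `p` acceptable -/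
  acc : S → P → Prop
  /-- student rank function (lower is better); meaningful on acceptable projects -/
  sRank : S → P → ℕ
  /-- lecturer rank function over students (lower is better) -/
  lRank : L → S → ℕ

variable {S P L : Type}

/-- students assigned to a project in `M` -/
noncomputable def projAssignees [Fintype S] (M : S → Option P) (p : P) : Finset S :=
  Finset.univ.filter (fun s => M s = some p)

/-- students assigned to some project of lecturer `k` in `M` -/
noncomputable def lecAssignees [Fintype S] (I : SPAST S P L) (M : S → Option P) (k : L) :
    Finset S :=
  Finset.univ.filter (fun s => ∃ p, M s = some p ∧ I.lec p = k)

def IsMatching [Fintype S] (I : SPAST S P L) (M : S → Option P) : Prop :=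
  (∀ s p, M s = some p → I.acc s p) ∧
  (∀ p, (projAssignees M p).card ≤ I.cap p) ∧
  (∀ k, (lecAssignees I M k).card ≤ I.dcap k)

def ProjFull [Fintype S] (I : SPAST S P L) (M : S → Option P) (p : P) : Prop :=
  (projAssignees M p).card = I.cap p

def LecFull [Fintype S] (I : SPAST S P L) (M : S → Option P) (k : L) : Prop :=
  (lecAssignees I M k).card = I.dcap k

/-- `s` finds `p` acceptable and is unassigned or strictly prefers `p` to `M(s)`. -/
def WantsToMove (I : SPAST S P L) (M : S → Option P) (s : S) (p : P) : Prop :=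
  I.acc s p ∧ (M s = none ∨ ∃ p', M s = some p' ∧ I.sRank s p < I.sRank s p')

/-- `(s, p)` is a blocking pair of `M`. -/
def Blocks [Fintype S] (I : SPAST S P L) (M : S → Option P) (s : S) (p : P) : Prop :=
  WantsToMove I M s p ∧
  ( (¬ ProjFull I M p ∧ ¬ LecFull I M (I.lec p)) ∨
    (¬ ProjFull I M p ∧ LecFull I M (I.lec p) ∧
      (s ∈ lecAssignees I M (I.lec p) ∨
       ∃ s' ∈ lecAssignees I M (I.lec p), I.lRank (I.lec p) s < I.lRank (I.lec p) s')) ∨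
    (ProjFull I M p ∧
       ∃ s' ∈ projAssignees M p, I.lRank (I.lec p) s < I.lRank (I.lec p) s') )

def Stable [Fintype S] (I : SPAST S P L) (M : S → Option P) : Prop :=
  IsMatching I M ∧ ∀ s p, ¬ Blocks I M s p

/-- the number of assigned agents in a matching -/
noncomputable def msize {A B : Type} [Fintype A] (M : A → Option B) : ℕ :=
  (Finset.univ.filter (fun a => (M a).isSome)).card

/-! ### Auxiliary development for Statement 11. -/

namespace Stmt11Aux

set_option linter.unusedSectionVars false

variable {S P L : Type} [Fintype S] (I : SPAST S P L)

lemma mem_projAssignees {X : S → Option P} {s : S} {p : P} :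
    s ∈ projAssignees X p ↔ X s = some p := by
  simp [projAssignees]

lemma mem_lecAssignees {X : S → Option P} {s : S} {k : L} :
    s ∈ lecAssignees I X k ↔ ∃ p, X s = some p ∧ I.lec p = k := by
  simp [lecAssignees]

lemma exists_mem_notMem_of_card_lt {A B : Finset S} (h : A.card < B.card) :
    ∃ s ∈ B, s ∉ A := by
  by_contra hc
  push_neg at hc
  exact absurd (Finset.card_le_card fun x hx => hc x hx) (not_le.mpr h)

lemma projAssignees_disjoint {X : S → Option P} {p q : P} (h : p ≠ q) :
    Disjoint (projAssignees X p) (projAssignees X q) := by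
  rw [Finset.disjoint_left]
  intro s hsp hsq
  rw [mem_projAssignees] at hsp hsq
  exact h (by rw [hsp] at hsq; exact Option.some.inj hsq)

lemma lecAssignees_disjoint {X : S → Option P} {k k' : L} (h : k ≠ k') :
    Disjoint (lecAssignees I X k) (lecAssignees I X k') := by
  rw [Finset.disjoint_left]
  intro s hsp hsq
  obtain ⟨p, hp, hpl⟩ := (mem_lecAssignees I).mp hsp
  obtain ⟨q, hq, hql⟩ := (mem_lecAssignees I).mp hsq
  rw [hp] at hq
  exact h (by rw [← hpl, ← hql, Option.some.inj hq])

/-- Counting lemma: if each project of lecturer `k` has no more `X`-assignees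
than `Y`-assignees, then `k` has no more `X`-assignees than `Y`-assignees. -/
lemma card_lecAssignees_le {X Y : S → Option P} (k : L)
    (h : ∀ p, I.lec p = k → (projAssignees X p).card ≤ (projAssignees Y p).card) :
    (lecAssignees I X k).card ≤ (lecAssignees I Y k).card := by
  classical
  set Pk : Finset P :=
    ((lecAssignees I X k ∪ lecAssignees I Y k).biUnion
      (fun s => (X s).toFinset ∪ (Y s).toFinset)).filter (fun p => I.lec p = k) with hPk
  have hmemPk : ∀ p ∈ Pk, I.lec p = k := fun p hp => (Finset.mem_filter.mp hp).2
  have key : ∀ (W : S → Option P),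
      (∀ s, s ∈ lecAssignees I W k → s ∈ lecAssignees I X k ∪ lecAssignees I Y k) →
      (∀ s p, W s = some p → p ∈ (X s).toFinset ∪ (Y s).toFinset) →
      lecAssignees I W k = Pk.biUnion (fun p => projAssignees W p) := by
    intro W h1 h2
    ext s
    constructor
    · intro hs
      obtain ⟨p, hWs, hlec⟩ := (mem_lecAssignees I).mp hs
      refine Finset.mem_biUnion.mpr ⟨p, ?_, (mem_projAssignees).mpr hWs⟩
      refine Finset.mem_filter.mpr ⟨?_, hlec⟩
      exact Finset.mem_biUnion.mpr ⟨s, h1 s hs, h2 s p hWs⟩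
    · intro hs
      obtain ⟨p, hp, hsp⟩ := Finset.mem_biUnion.mp hs
      exact (mem_lecAssignees I).mpr ⟨p, (mem_projAssignees).mp hsp, hmemPk p hp⟩
  have hX : lecAssignees I X k = Pk.biUnion (fun p => projAssignees X p) :=
    key X (fun s hs => Finset.mem_union_left _ hs)
      (fun s p hp => Finset.mem_union_left _ (Option.mem_toFinset.mpr (by simp [hp])))
  have hY : lecAssignees I Y k = Pk.biUnion (fun p => projAssignees Y p) :=
    key Y (fun s hs => Finset.mem_union_right _ hs)
      (fun s p hp => Finset.mem_union_right _ (Option.mem_toFinset.mpr (by simp [hp])))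
  rw [hX, hY,
    Finset.card_biUnion (fun p _ q _ hpq => projAssignees_disjoint hpq),
    Finset.card_biUnion (fun p _ q _ hpq => projAssignees_disjoint hpq)]
  exact Finset.sum_le_sum fun p hp => h p (hmemPk p hp)

/-- Counting lemma: if each lecturer has no more `X`-assignees than
`Y`-assignees then `msize X ≤ msize Y`. -/
lemma msize_le {X Y : S → Option P}
    (h : ∀ k, (lecAssignees I X k).card ≤ (lecAssignees I Y k).card) :
    msize X ≤ msize Y := by
  classical
  set K : Finset L :=
    (Finset.univ : Finset S).biUnion
      (fun s => ((X s).toFinset ∪ (Y s).toFinset).image I.lec) with hK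
  have key : ∀ (W : S → Option P),
      (∀ s p, W s = some p → p ∈ (X s).toFinset ∪ (Y s).toFinset) →
      Finset.univ.filter (fun s => (W s).isSome) = K.biUnion (fun k => lecAssignees I W k) := by
    intro W h2
    ext s
    constructor
    · intro hs
      have hs' : (W s).isSome := (Finset.mem_filter.mp hs).2
      obtain ⟨p, hp⟩ := Option.isSome_iff_exists.mp hs'
      refine Finset.mem_biUnion.mpr ⟨I.lec p, ?_, (mem_lecAssignees I).mpr ⟨p, hp, rfl⟩⟩
      exact Finset.mem_biUnion.mpr ⟨s, Finset.mem_univ s,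
        Finset.mem_image.mpr ⟨p, h2 s p hp, rfl⟩⟩
    · intro hs
      obtain ⟨k, _, hsk⟩ := Finset.mem_biUnion.mp hs
      obtain ⟨p, hp, _⟩ := (mem_lecAssignees I).mp hsk
      exact Finset.mem_filter.mpr ⟨Finset.mem_univ s, by simp [hp]⟩
  have hX := key X (fun s p hp => Finset.mem_union_left _ (Option.mem_toFinset.mpr (by simp [hp])))
  have hY := key Y (fun s p hp => Finset.mem_union_right _ (Option.mem_toFinset.mpr (by simp [hp])))
  unfold msize
  rw [hX, hY,
    Finset.card_biUnion (fun k _ k' _ hkk => lecAssignees_disjoint I hkk),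
    Finset.card_biUnion (fun k _ k' _ hkk => lecAssignees_disjoint I hkk)]
  exact Finset.sum_le_sum fun k _ => h k



/-! ### The rejection process -/

/-- candidate projects for student `s`: acceptable, in the pool `P₀`,
and not deleted. -/
noncomputable def cand (P₀ : Finset P) (D : Finset (S × P)) (s : S) : Finset P :=
  P₀.filter (fun p => I.acc s p ∧ (s, p) ∉ D)

/-- the current pointer of student `s`: a best (minimum-rank) candidate. -/
noncomputable def sig (P₀ : Finset P) (D : Finset (S × P)) (s : S) : Option P :=
  if h : (cand I P₀ D s).Nonempty then
    some (Finset.exists_min_image (cand I P₀ D s) (I.sRank s) h).choose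
  else none

lemma sig_mem {P₀ : Finset P} {D : Finset (S × P)} {s : S} {p : P}
    (h : sig I P₀ D s = some p) : p ∈ cand I P₀ D s := by
  unfold sig at h
  split_ifs at h with hc
  obtain ⟨h1, _⟩ := (Finset.exists_min_image (cand I P₀ D s) (I.sRank s) hc).choose_spec
  exact (Option.some.inj h) ▸ h1

lemma sig_min {P₀ : Finset P} {D : Finset (S × P)} {s : S} {p : P}
    (h : sig I P₀ D s = some p) : ∀ q ∈ cand I P₀ D s, I.sRank s p ≤ I.sRank s q := by
  unfold sig at h
  split_ifs at h with hc
  obtain ⟨_, h2⟩ := (Finset.exists_min_image (cand I P₀ D s) (I.sRank s) hc).choose_spec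
  exact (Option.some.inj h) ▸ h2

lemma sig_isSome {P₀ : Finset P} {D : Finset (S × P)} {s : S}
    (h : (cand I P₀ D s).Nonempty) : (sig I P₀ D s).isSome := by
  unfold sig
  rw [dif_pos h]
  rfl

/-- quiescence: no project and no lecturer is oversubscribed. -/
def Quiet (P₀ : Finset P) (D : Finset (S × P)) : Prop :=
  (∀ p, (projAssignees (sig I P₀ D) p).card ≤ I.cap p) ∧
  (∀ k, (lecAssignees I (sig I P₀ D) k).card ≤ I.dcap k)

/-- specification of a legal deletion. -/
def DelSpec (P₀ : Finset P) (D : Finset (S × P)) (x : S × P) : Prop :=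
  sig I P₀ D x.1 = some x.2 ∧
  ((I.cap x.2 < (projAssignees (sig I P₀ D) x.2).card ∧
      ∀ s' ∈ projAssignees (sig I P₀ D) x.2,
        I.lRank (I.lec x.2) s' ≤ I.lRank (I.lec x.2) x.1) ∨
   ((∀ p, (projAssignees (sig I P₀ D) p).card ≤ I.cap p) ∧
      I.dcap (I.lec x.2) < (lecAssignees I (sig I P₀ D) (I.lec x.2)).card ∧
      ∀ s' ∈ lecAssignees I (sig I P₀ D) (I.lec x.2),
        I.lRank (I.lec x.2) s' ≤ I.lRank (I.lec x.2) x.1))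

lemma exists_del {P₀ : Finset P} {D : Finset (S × P)} (h : ¬ Quiet I P₀ D) :
    ∃ x, DelSpec I P₀ D x := by
  unfold Quiet at h
  by_cases hp : ∀ p, (projAssignees (sig I P₀ D) p).card ≤ I.cap p
  · -- a lecturer is oversubscribed
    have hk : ∃ k, I.dcap k < (lecAssignees I (sig I P₀ D) k).card := by
      by_contra hk
      push_neg at hk
      exact h ⟨hp, fun k => (hk k)⟩
    obtain ⟨k, hk⟩ := hk
    have hne : (lecAssignees I (sig I P₀ D) k).Nonempty := by
      rw [← Finset.card_pos]
      omega
    obtain ⟨s₀, hmem, hmax⟩ :=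
      Finset.exists_max_image (lecAssignees I (sig I P₀ D) k) (I.lRank k) hne
    obtain ⟨p, hps, hpl⟩ := (mem_lecAssignees I).mp hmem
    refine ⟨(s₀, p), hps, Or.inr ⟨hp, ?_, ?_⟩⟩
    · simpa [hpl] using hk
    · intro s' hs'
      rw [hpl] at hs' ⊢
      exact hmax s' hs'
  · push_neg at hp
    obtain ⟨p, hp⟩ := hp
    have hne : (projAssignees (sig I P₀ D) p).Nonempty := by
      rw [← Finset.card_pos]
      omega
    obtain ⟨s₀, hmem, hmax⟩ :=
      Finset.exists_max_image (projAssignees (sig I P₀ D) p) (I.lRank (I.lec p)) hne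
    exact ⟨(s₀, p), (mem_projAssignees).mp hmem, Or.inl ⟨hp, hmax⟩⟩

/-- one step of the rejection process. -/
noncomputable def step (P₀ : Finset P) (D : Finset (S × P)) : Finset (S × P) :=
  if h : Quiet I P₀ D then D else insert (exists_del I h).choose D

/-- the full rejection process with fuel `n`. -/
noncomputable def run (P₀ : Finset P) : ℕ → Finset (S × P) → Finset (S × P)
  | 0, D => D
  | (n + 1), D => run P₀ n (step I P₀ D)

lemma step_of_quiet {P₀ : Finset P} {D : Finset (S × P)} (h : Quiet I P₀ D) :
    step I P₀ D = D := by
  unfold step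
  rw [dif_pos h]

lemma run_of_quiet {P₀ : Finset P} (n : ℕ) {D : Finset (S × P)} (h : Quiet I P₀ D) :
    run I P₀ n D = D := by
  induction n with
  | zero => rfl
  | succ n ih => rw [run, step_of_quiet I h, ih]

lemma step_subset {P₀ : Finset P} {D : Finset (S × P)}
    (hD : D ⊆ Finset.univ ×ˢ P₀) : step I P₀ D ⊆ Finset.univ ×ˢ P₀ := by
  unfold step
  split_ifs with h
  · exact hD
  · intro x hx
    rcases Finset.mem_insert.mp hx with hx | hx
    · subst hx
      have hspec := (exists_del I h).choose_spec
      have := sig_mem I hspec.1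
      have hmem := (Finset.mem_filter.mp this).1
      exact Finset.mem_product.mpr ⟨Finset.mem_univ _, hmem⟩
    · exact hD hx

lemma step_card {P₀ : Finset P} {D : Finset (S × P)} (h : ¬ Quiet I P₀ D) :
    (step I P₀ D).card = D.card + 1 := by
  unfold step
  rw [dif_neg h]
  have hspec := (exists_del I h).choose_spec
  have hnot : (exists_del I h).choose ∉ D := by
    have := sig_mem I hspec.1
    have h2 := (Finset.mem_filter.mp this).2.2
    intro hc
    exact h2 (by simpa using hc)
  rw [Finset.card_insert_of_notMem hnot]

lemma run_quiet_of_fuel {P₀ : Finset P} :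
    ∀ (n : ℕ) (D : Finset (S × P)), D ⊆ Finset.univ ×ˢ P₀ →
      ((Finset.univ : Finset S) ×ˢ P₀).card < D.card + n → Quiet I P₀ (run I P₀ n D) := by
  intro n
  induction n with
  | zero =>
    intro D hD hc
    exact absurd (Finset.card_le_card hD) (by omega)
  | succ n ih =>
    intro D hD hc
    by_cases hq : Quiet I P₀ D
    · rw [run_of_quiet I _ hq]
      exact hq
    · rw [run]
      exact ih _ (step_subset I hD) (by rw [step_card I hq]; omega)

/-! ### Stable pairs are never deleted -/

/-- invariant: no pair of the matching `Z` has been deleted. -/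
def Inv (Z : S → Option P) (D : Finset (S × P)) : Prop :=
  ∀ s p, Z s = some p → (s, p) ∉ D

/-- If the pointer of `s` differs from its `Z`-assignment, then `s` strictly
prefers its pointer (given that `Z`-pairs are not deleted). -/
lemma sig_wants
    (hstrictS : ∀ s p p', I.acc s p → I.acc s p' → I.sRank s p = I.sRank s p' → p = p')
    {P₀ : Finset P} {D : Finset (S × P)} {Z : S → Option P}
    (hZm : IsMatching I Z) (hP₀ : ∀ s p, Z s = some p → p ∈ P₀)
    (hInv : Inv Z D) {s : S} {p : P}
    (hsig : sig I P₀ D s = some p) (hne : Z s ≠ some p) :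
    WantsToMove I Z s p := by
  have hpc := sig_mem I hsig
  have hacc : I.acc s p := (Finset.mem_filter.mp hpc).2.1
  refine ⟨hacc, ?_⟩
  cases hZs : Z s with
  | none => exact Or.inl rfl
  | some q =>
    refine Or.inr ⟨q, rfl, ?_⟩
    have haccq : I.acc s q := hZm.1 s q hZs
    have hq : q ∈ cand I P₀ D s :=
      Finset.mem_filter.mpr ⟨hP₀ s q hZs, haccq, hInv s q hZs⟩
    have hle := sig_min I hsig q hq
    rcases lt_or_eq_of_le hle with hlt | heq
    · exact hlt
    · exact absurd (hstrictS s p q hacc haccq heq) (fun hpq => hne (hpq ▸ hZs))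

/-- Key lemma: a legal deletion never deletes a pair of a stable matching. -/
lemma del_safe
    (hstrictS : ∀ s p p', I.acc s p → I.acc s p' → I.sRank s p = I.sRank s p' → p = p')
    (hstrictL : ∀ k s s', (∃ p, I.acc s p ∧ I.lec p = k) →
      (∃ p, I.acc s' p ∧ I.lec p = k) → I.lRank k s = I.lRank k s' → s = s')
    {P₀ : Finset P} {D : Finset (S × P)} {Z : S → Option P}
    (hZ : Stable I Z) (hP₀ : ∀ s p, Z s = some p → p ∈ P₀) (hInv : Inv Z D)
    {x : S × P} (hx : DelSpec I P₀ D x) : Z x.1 ≠ some x.2 := by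
  obtain ⟨s₀, p⟩ := x
  intro hZx
  obtain ⟨hsig, hcase⟩ := hx
  dsimp only at hsig hZx hcase
  have haccs₀ : I.acc s₀ p := hZ.1.1 s₀ p hZx
  have hs₀Zp : s₀ ∈ projAssignees Z p := (mem_projAssignees).mpr hZx
  have hs₀Zk : s₀ ∈ lecAssignees I Z (I.lec p) := (mem_lecAssignees I).mpr ⟨p, hZx, rfl⟩
  rcases hcase with ⟨hover, hworst⟩ | ⟨hprojok, hover, hworst⟩
  · -- an oversubscribed project
    have h1 : (projAssignees Z p).card < (projAssignees (sig I P₀ D) p).card :=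
      lt_of_le_of_lt (hZ.1.2.1 p) hover
    obtain ⟨s', hs'σ, hs'Z⟩ := exists_mem_notMem_of_card_lt h1
    have hs'sig : sig I P₀ D s' = some p := (mem_projAssignees).mp hs'σ
    have hZs'ne : Z s' ≠ some p := fun h => hs'Z ((mem_projAssignees).mpr h)
    have hw : WantsToMove I Z s' p := sig_wants I hstrictS hZ.1 hP₀ hInv hs'sig hZs'ne
    have hblock := hZ.2 s' p
    have haccs' : I.acc s' p := hw.1
    have hrank : I.lRank (I.lec p) s' ≤ I.lRank (I.lec p) s₀ := hworst s' hs'σ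
    have hnes : s' ≠ s₀ := fun h => hs'Z (h ▸ hs₀Zp)
    have heqc : I.lRank (I.lec p) s₀ = I.lRank (I.lec p) s' → False := fun h =>
      hnes (hstrictL (I.lec p) s' s₀ ⟨p, haccs', rfl⟩ ⟨p, haccs₀, rfl⟩ h.symm)
    by_cases hPF : ProjFull I Z p
    · have h3 : ¬ I.lRank (I.lec p) s' < I.lRank (I.lec p) s₀ := fun hlt =>
        hblock ⟨hw, Or.inr (Or.inr ⟨hPF, s₀, hs₀Zp, hlt⟩)⟩
      exact heqc (le_antisymm (not_lt.mp h3) hrank)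
    · by_cases hLF : LecFull I Z (I.lec p)
      · have h3 : ¬ I.lRank (I.lec p) s' < I.lRank (I.lec p) s₀ := fun hlt =>
          hblock ⟨hw, Or.inr (Or.inl ⟨hPF, hLF, Or.inr ⟨s₀, hs₀Zk, hlt⟩⟩)⟩
        exact heqc (le_antisymm (not_lt.mp h3) hrank)
      · exact hblock ⟨hw, Or.inl ⟨hPF, hLF⟩⟩
  · -- an oversubscribed lecturer (all projects within capacity)
    have hZk : (lecAssignees I Z (I.lec p)).card
        < (lecAssignees I (sig I P₀ D) (I.lec p)).card :=
      lt_of_le_of_lt (hZ.1.2.2 (I.lec p)) hover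
    have hex : ∃ q, I.lec q = I.lec p ∧
        (projAssignees Z q).card < (projAssignees (sig I P₀ D) q).card := by
      by_contra hc
      push_neg at hc
      exact absurd (card_lecAssignees_le I (I.lec p) hc) (not_le.mpr hZk)
    obtain ⟨q, hlecq, hqlt⟩ := hex
    have hqcap : (projAssignees (sig I P₀ D) q).card ≤ I.cap q := hprojok q
    obtain ⟨s', hs'σq, hs'Zq⟩ := exists_mem_notMem_of_card_lt hqlt
    have hs'sig : sig I P₀ D s' = some q := (mem_projAssignees).mp hs'σq
    have hZs'ne : Z s' ≠ some q := fun h => hs'Zq ((mem_projAssignees).mpr h)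
    have hw : WantsToMove I Z s' q := sig_wants I hstrictS hZ.1 hP₀ hInv hs'sig hZs'ne
    have haccs' : I.acc s' q := hw.1
    have hblock := hZ.2 s' q
    have hPF : ¬ ProjFull I Z q := by
      unfold ProjFull
      omega
    by_cases hLF : LecFull I Z (I.lec p)
    · have hLF' : LecFull I Z (I.lec q) := by rwa [hlecq]
      have hs'pool : s' ∈ lecAssignees I (sig I P₀ D) (I.lec p) :=
        (mem_lecAssignees I).mpr ⟨q, hs'sig, hlecq⟩
      have hrank : I.lRank (I.lec p) s' ≤ I.lRank (I.lec p) s₀ := hworst s' hs'pool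
      have hs₀Zkq : s₀ ∈ lecAssignees I Z (I.lec q) := by rwa [hlecq]
      have hnotin : s' ∉ lecAssignees I Z (I.lec q) := fun hmem =>
        hblock ⟨hw, Or.inr (Or.inl ⟨hPF, hLF', Or.inl hmem⟩)⟩
      have h3 : ¬ I.lRank (I.lec q) s' < I.lRank (I.lec q) s₀ := fun hlt =>
        hblock ⟨hw, Or.inr (Or.inl ⟨hPF, hLF', Or.inr ⟨s₀, hs₀Zkq, hlt⟩⟩)⟩
      have hrank' : I.lRank (I.lec q) s' ≤ I.lRank (I.lec q) s₀ := by rwa [hlecq]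
      have heq : I.lRank (I.lec q) s₀ = I.lRank (I.lec q) s' :=
        le_antisymm (not_lt.mp h3) hrank'
      have : s' = s₀ :=
        hstrictL (I.lec q) s' s₀ ⟨q, haccs', rfl⟩ ⟨p, haccs₀, hlecq.symm⟩ heq.symm
      exact hnotin (this ▸ hs₀Zkq)
    · have hLF' : ¬ LecFull I Z (I.lec q) := by rwa [hlecq]
      exact hblock ⟨hw, Or.inl ⟨hPF, hLF'⟩⟩

lemma inv_step
    (hstrictS : ∀ s p p', I.acc s p → I.acc s p' → I.sRank s p = I.sRank s p' → p = p')
    (hstrictL : ∀ k s s', (∃ p, I.acc s p ∧ I.lec p = k) →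
      (∃ p, I.acc s' p ∧ I.lec p = k) → I.lRank k s = I.lRank k s' → s = s')
    {P₀ : Finset P} {D : Finset (S × P)} {Z : S → Option P}
    (hZ : Stable I Z) (hP₀ : ∀ s p, Z s = some p → p ∈ P₀) (hInv : Inv Z D) :
    Inv Z (step I P₀ D) := by
  unfold step
  split_ifs with h
  · exact hInv
  · intro s p hZs hmem
    rcases Finset.mem_insert.mp hmem with hx | hx
    · have hspec := (exists_del I h).choose_spec
      have := del_safe I hstrictS hstrictL hZ hP₀ hInv hspec
      rw [← hx] at this
      exact this hZs
    · exact hInv s p hZs hx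

lemma inv_run
    (hstrictS : ∀ s p p', I.acc s p → I.acc s p' → I.sRank s p = I.sRank s p' → p = p')
    (hstrictL : ∀ k s s', (∃ p, I.acc s p ∧ I.lec p = k) →
      (∃ p, I.acc s' p ∧ I.lec p = k) → I.lRank k s = I.lRank k s' → s = s')
    {P₀ : Finset P} {Z : S → Option P}
    (hZ : Stable I Z) (hP₀ : ∀ s p, Z s = some p → p ∈ P₀) :
    ∀ (n : ℕ) (D : Finset (S × P)), Inv Z D → Inv Z (run I P₀ n D) := by
  intro n
  induction n with
  | zero => intro D h; exact h
  | succ n ih =>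
    intro D h
    rw [run]
    exact ih _ (inv_step I hstrictS hstrictL hZ hP₀ h)

/-- Endgame: for any stable matching `Z` respected by the final deletion set,
the set of matched students in `Z` equals that of the final pointer map. -/
lemma matched_eq
    (hstrictS : ∀ s p p', I.acc s p → I.acc s p' → I.sRank s p = I.sRank s p' → p = p')
    {P₀ : Finset P} {D : Finset (S × P)} {Z : S → Option P}
    (hZ : Stable I Z) (hP₀ : ∀ s p, Z s = some p → p ∈ P₀) (hInv : Inv Z D)
    (hquiet : Quiet I P₀ D) :
    Finset.univ.filter (fun s => (Z s).isSome)
      = Finset.univ.filter (fun s => (sig I P₀ D s).isSome) := by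
  have hsub : Finset.univ.filter (fun s => (Z s).isSome)
      ⊆ Finset.univ.filter (fun s => (sig I P₀ D s).isSome) := by
    intro s hs
    obtain ⟨p, hp⟩ := Option.isSome_iff_exists.mp (Finset.mem_filter.mp hs).2
    have hpc : p ∈ cand I P₀ D s :=
      Finset.mem_filter.mpr ⟨hP₀ s p hp, hZ.1.1 s p hp, hInv s p hp⟩
    exact Finset.mem_filter.mpr ⟨Finset.mem_univ s, sig_isSome I ⟨p, hpc⟩⟩
  have hpool : ∀ k, (lecAssignees I (sig I P₀ D) k).card ≤ (lecAssignees I Z k).card := by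
    intro k
    by_cases hLF : LecFull I Z k
    · exact le_trans (hquiet.2 k) (le_of_eq hLF.symm)
    · apply card_lecAssignees_le
      intro p hlec
      by_cases hPF : ProjFull I Z p
      · exact le_trans (hquiet.1 p) (le_of_eq hPF.symm)
      · apply Finset.card_le_card
        intro s hs
        have hsig : sig I P₀ D s = some p := (mem_projAssignees).mp hs
        by_contra hZs
        have hZsne : Z s ≠ some p := fun h => hZs ((mem_projAssignees).mpr h)
        have hw := sig_wants I hstrictS hZ.1 hP₀ hInv hsig hZsne
        exact hZ.2 s p ⟨hw, Or.inl ⟨hPF, by rwa [hlec]⟩⟩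
  have hmsize : msize (sig I P₀ D) ≤ msize Z := msize_le I hpool
  exact Finset.eq_of_subset_of_card_le hsub hmsize

end Stmt11Aux

/-- In an SPA-ST instance in which all preference lists are
strictly ordered (no ties among acceptable partners), all stable matchings have
the same cardinality and, moreover, exactly the same set of students is
assigned in every stable matching. -/
theorem stmt11 [Fintype S] (I : SPAST S P L)
    (hstrictS : ∀ s p p', I.acc s p → I.acc s p' →
      I.sRank s p = I.sRank s p' → p = p')
    (hstrictL : ∀ k s s', (∃ p, I.acc s p ∧ I.lec p = k) →
      (∃ p, I.acc s' p ∧ I.lec p = k) → I.lRank k s = I.lRank k s' → s = s')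
    (M N : S → Option P) (hM : Stable I M) (hN : Stable I N) :
    msize M = msize N ∧ ∀ s, (M s).isSome ↔ (N s).isSome := by
  classical
  open Stmt11Aux in
  · set P₀ : Finset P :=
      Finset.univ.biUnion (fun s => (M s).toFinset ∪ (N s).toFinset) with hP₀def
    have hP₀M : ∀ s p, M s = some p → p ∈ P₀ := fun s p h =>
      Finset.mem_biUnion.mpr ⟨s, Finset.mem_univ s,
        Finset.mem_union_left _ (Option.mem_toFinset.mpr (by simp [h]))⟩
    have hP₀N : ∀ s p, N s = some p → p ∈ P₀ := fun s p h =>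
      Finset.mem_biUnion.mpr ⟨s, Finset.mem_univ s,
        Finset.mem_union_right _ (Option.mem_toFinset.mpr (by simp [h]))⟩
    set n₀ : ℕ := ((Finset.univ : Finset S) ×ˢ P₀).card + 1 with hn₀
    set Df : Finset (S × P) := run I P₀ n₀ ∅ with hDf
    have hquiet : Quiet I P₀ Df :=
      run_quiet_of_fuel I n₀ ∅ (Finset.empty_subset _) (by simp [hn₀])
    have hInv0 : ∀ Z : S → Option P, Inv Z (∅ : Finset (S × P)) :=
      fun Z s p _ h => absurd h (Finset.notMem_empty _)
    have hInvM : Inv M Df := inv_run I hstrictS hstrictL hM hP₀M n₀ ∅ (hInv0 M)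
    have hInvN : Inv N Df := inv_run I hstrictS hstrictL hN hP₀N n₀ ∅ (hInv0 N)
    have hMeq := matched_eq I hstrictS hM hP₀M hInvM hquiet
    have hNeq := matched_eq I hstrictS hN hP₀N hInvN hquiet
    have hMN : Finset.univ.filter (fun s => (M s).isSome)
        = Finset.univ.filter (fun s => (N s).isSome) := hMeq.trans hNeq.symm
    constructor
    · show msize M = msize N
      unfold msize
      rw [hMN]
    · intro s
      constructor
      · intro h
        have : s ∈ Finset.univ.filter (fun s => (M s).isSome) :=
          Finset.mem_filter.mpr ⟨Finset.mem_univ s, h⟩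
        rw [hMN] at this
        exact (Finset.mem_filter.mp this).2
      · intro h
        have : s ∈ Finset.univ.filter (fun s => (N s).isSome) :=
          Finset.mem_filter.mpr ⟨Finset.mem_univ s, h⟩
        rw [← hMN] at this
        exact (Finset.mem_filter.mp this).2
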